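/- Let (Ω, F, P) be a probability space, k a positive integer, p ≥ 1, and 0 < δ ≤ 1. Let Σ be a k-semiring on Ω with Σ ⊆ F, let Q be a finite partition of Ω with Q ⊆ Σ, and let f ∈ L^p(Ω, F, P) with ‖f − E(f | A_Q)‖_Σ > δ. Then there exists a refinement R of Q with R ⊆ Σ, |R| ≤ |Q| (k+1), and ‖E(f | A_R) − E(f | A_Q)‖_{L^p} > δ. -/

import Mathlib

open MeasureTheory Set

/-- A `k`-semiring of sets on `Ω`. -/
def IsSemiring {Ω : Type*} (k : ℕ) (𝒮 : Set (Set Ω)) : Prop :=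
  ∅ ∈ 𝒮 ∧ Set.univ ∈ 𝒮 ∧ (∀ A ∈ 𝒮, ∀ B ∈ 𝒮, A ∩ B ∈ 𝒮) ∧
    ∀ A ∈ 𝒮, ∀ B ∈ 𝒮, ∃ ℓ, 1 ≤ ℓ ∧ ℓ ≤ k ∧ ∃ R : Fin ℓ → Set Ω,
      (∀ i, R i ∈ 𝒮) ∧ (∀ i j, i ≠ j → Disjoint (R i) (R j)) ∧ A \ B = ⋃ i, R i


/-- The `𝒮`-uniformity seminorm of `f`. -/
noncomputable def unifNorm {Ω : Type*} [MeasurableSpace Ω] (P : Measure Ω)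
    (𝒮 : Set (Set Ω)) (f : Ω → ℝ) : ℝ :=
  sSup {r | ∃ A ∈ 𝒮, r = |∫ x in A, f x ∂P|}

theorem stmt12 {Ω : Type*} [MeasurableSpace Ω] (P : Measure Ω) [IsProbabilityMeasure P]
    {k : ℕ} (hk : 1 ≤ k) {p : ℝ} (hp : 1 ≤ p) {δ : ℝ} (hδ0 : 0 < δ) (hδ1 : δ ≤ 1)
    {𝒮 : Set (Set Ω)} (hS : IsSemiring k 𝒮) (hSm : ∀ A ∈ 𝒮, MeasurableSet A)
    (Q : Finset (Set Ω)) (hQS : (Q : Set (Set Ω)) ⊆ 𝒮)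
    (hQdisj : (Q : Set (Set Ω)).Pairwise Disjoint) (hQcov : ⋃₀ (Q : Set (Set Ω)) = Set.univ)
    (f : Ω → ℝ) (hf : MemLp f (ENNReal.ofReal p) P)
    (hbig : unifNorm P 𝒮 (f - P[f | MeasurableSpace.generateFrom (Q : Set (Set Ω))]) > δ) :
    ∃ R : Finset (Set Ω), (R : Set (Set Ω)) ⊆ 𝒮 ∧ (R : Set (Set Ω)).Pairwise Disjoint ∧
      ⋃₀ (R : Set (Set Ω)) = Set.univ ∧ (∀ B ∈ R, ∃ A ∈ Q, B ⊆ A) ∧ R.card ≤ Q.card * (k + 1) ∧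
      ENNReal.ofReal δ <
        eLpNorm (P[f | MeasurableSpace.generateFrom (R : Set (Set Ω))]
          - P[f | MeasurableSpace.generateFrom (Q : Set (Set Ω))]) (ENNReal.ofReal p) P := by
  classical
  set g : Ω → ℝ := f - P[f | MeasurableSpace.generateFrom (Q : Set (Set Ω))] with hgdef
  -- extract a witness S from the uniformity norm bound
  obtain ⟨S, hSmem, hSint⟩ : ∃ A ∈ 𝒮, δ < |∫ x in A, g x ∂P| := by
    by_contra h
    push_neg at h
    have hle : unifNorm P 𝒮 g ≤ δ := by
      unfold unifNorm
      refine csSup_le ⟨|∫ x in (∅ : Set Ω), g x ∂P|, ∅, hS.1, rfl⟩ ?_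
      rintro r ⟨A, hA, rfl⟩
      exact h A hA
    exact absurd hbig (not_lt.mpr hle)
  -- construct the refinement
  have key : ∀ A ∈ Q, ∃ ℓ, 1 ≤ ℓ ∧ ℓ ≤ k ∧ ∃ Rf : Fin ℓ → Set Ω,
      (∀ i, Rf i ∈ 𝒮) ∧ (∀ i j, i ≠ j → Disjoint (Rf i) (Rf j)) ∧ A \ S = ⋃ i, Rf i :=
    fun A hA => hS.2.2.2 A (hQS hA) S hSmem
  choose! ℓ hℓ1 hℓk Rf hRfS hRfd hRfeq using key
  set pieces : Set Ω → Finset (Set Ω) :=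
    fun A => insert (A ∩ S) ((Finset.univ : Finset (Fin (ℓ A))).image (Rf A)) with hpiecesdef
  set R : Finset (Set Ω) := Q.biUnion pieces with hRdef
  have hmemR : ∀ B, B ∈ R ↔ ∃ A ∈ Q, B ∈ pieces A := fun B => Finset.mem_biUnion
  have hmemp : ∀ A B, B ∈ pieces A ↔ B = A ∩ S ∨ ∃ i, Rf A i = B := by
    intro A B
    simp [hpiecesdef]
  have hRfsub : ∀ A ∈ Q, ∀ i, Rf A i ⊆ A \ S := by
    intro A hA i
    rw [hRfeq A hA]
    exact subset_iUnion _ i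
  have hpsub : ∀ A ∈ Q, ∀ B ∈ pieces A, B ⊆ A := by
    intro A hA B hB
    rcases (hmemp A B).1 hB with rfl | ⟨i, rfl⟩
    · exact inter_subset_left
    · exact (hRfsub A hA i).trans diff_subset
  have hRS : (R : Set (Set Ω)) ⊆ 𝒮 := by
    intro B hB
    rcases (hmemR B).1 hB with ⟨A, hA, hBp⟩
    rcases (hmemp A B).1 hBp with rfl | ⟨i, rfl⟩
    · exact hS.2.2.1 A (hQS hA) S hSmem
    · exact hRfS A hA i
  have hRdisj : (R : Set (Set Ω)).Pairwise Disjoint := by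
    intro B hB B' hB' hne
    rcases (hmemR B).1 hB with ⟨A, hA, hBp⟩
    rcases (hmemR B').1 hB' with ⟨A', hA', hBp'⟩
    by_cases hAA : A = A'
    · subst hAA
      rcases (hmemp A B).1 hBp with rfl | ⟨i, rfl⟩
      · rcases (hmemp A B').1 hBp' with rfl | ⟨i, rfl⟩
        · exact absurd rfl hne
        · exact Disjoint.mono inter_subset_right (hRfsub A hA i)
            (disjoint_sdiff_self_right (x := S) (y := A))
      · rcases (hmemp A B').1 hBp' with rfl | ⟨j, rfl⟩
        · exact (Disjoint.mono inter_subset_right (hRfsub A hA i)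
            (disjoint_sdiff_self_right (x := S) (y := A))).symm
        · rcases eq_or_ne i j with rfl | hij
          · exact absurd rfl hne
          · exact hRfd A hA i j hij
    · exact Disjoint.mono (hpsub A hA B hBp) (hpsub A' hA' B' hBp')
        (hQdisj hA hA' hAA)
  have hRcov : ⋃₀ (R : Set (Set Ω)) = Set.univ := by
    apply eq_univ_of_forall
    intro x
    have hx : x ∈ ⋃₀ (Q : Set (Set Ω)) := by rw [hQcov]; trivial
    rcases hx with ⟨A, hA, hxA⟩
    by_cases hxS : x ∈ S
    · exact ⟨A ∩ S, (hmemR _).2 ⟨A, hA, (hmemp A _).2 (Or.inl rfl)⟩, ⟨hxA, hxS⟩⟩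
    · have : x ∈ A \ S := ⟨hxA, hxS⟩
      rw [hRfeq A hA] at this
      rcases mem_iUnion.1 this with ⟨i, hxi⟩
      exact ⟨Rf A i, (hmemR _).2 ⟨A, hA, (hmemp A _).2 (Or.inr ⟨i, rfl⟩)⟩, hxi⟩
  have hRref : ∀ B ∈ R, ∃ A ∈ Q, B ⊆ A := by
    intro B hB
    rcases (hmemR B).1 hB with ⟨A, hA, hBp⟩
    exact ⟨A, hA, hpsub A hA B hBp⟩
  have hRcard : R.card ≤ Q.card * (k + 1) := by
    calc R.card ≤ ∑ A ∈ Q, (pieces A).card := Finset.card_biUnion_le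
      _ ≤ ∑ A ∈ Q, (k + 1) := by
          apply Finset.sum_le_sum
          intro A hA
          calc (pieces A).card ≤ ((Finset.univ : Finset (Fin (ℓ A))).image (Rf A)).card + 1 :=
                Finset.card_insert_le _ _
            _ ≤ ℓ A + 1 := by
                have := Finset.card_image_le (s := (Finset.univ : Finset (Fin (ℓ A))))
                  (f := Rf A)
                simpa using Nat.add_le_add_right this 1
            _ ≤ k + 1 := Nat.add_le_add_right (hℓk A hA) 1
      _ = Q.card * (k + 1) := by rw [Finset.sum_const, smul_eq_mul]
  refine ⟨R, hRS, hRdisj, hRcov, hRref, hRcard, ?_⟩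
  -- analytic part
  have hmR : MeasurableSpace.generateFrom (R : Set (Set Ω)) ≤ ‹MeasurableSpace Ω› :=
    MeasurableSpace.generateFrom_le fun B hB => hSm B (hRS hB)
  have hp1 : (1 : ENNReal) ≤ ENNReal.ofReal p := ENNReal.one_le_ofReal.2 hp
  have hfint : Integrable f P := hf.integrable hp1
  have hSmR : MeasurableSet[MeasurableSpace.generateFrom (R : Set (Set Ω))] S := by
    have hSeq : S = ⋃ A ∈ Q, A ∩ S := by
      ext x
      simp only [mem_iUnion, mem_inter_iff]
      constructor
      · intro hxS
        have hx : x ∈ ⋃₀ (Q : Set (Set Ω)) := by rw [hQcov]; trivial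
        rcases hx with ⟨A, hA, hxA⟩
        exact ⟨A, hA, hxA, hxS⟩
      · rintro ⟨A, _, _, hxS⟩
        exact hxS
    rw [hSeq]
    exact MeasurableSet.biUnion Q.countable_toSet fun A hA =>
      MeasurableSpace.measurableSet_generateFrom
        ((hmemR _).2 ⟨A, hA, (hmemp A _).2 (Or.inl rfl)⟩)
  set h : Ω → ℝ := P[f | MeasurableSpace.generateFrom (R : Set (Set Ω))] - P[f | MeasurableSpace.generateFrom (Q : Set (Set Ω))] with hhdef
  have hhint : Integrable h P := integrable_condExp.sub integrable_condExp
  have hcondR : ∫ x in S, (P[f | MeasurableSpace.generateFrom (R : Set (Set Ω))]) x ∂P = ∫ x in S, f x ∂P :=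
    setIntegral_condExp hmR hfint hSmR
  have hinteq : ∫ x in S, h x ∂P = ∫ x in S, g x ∂P := by
    have h1 : ∫ x in S, h x ∂P
        = ∫ x in S, (P[f | MeasurableSpace.generateFrom (R : Set (Set Ω))]) x ∂P - ∫ x in S, (P[f | MeasurableSpace.generateFrom (Q : Set (Set Ω))]) x ∂P := by
      simp only [hhdef, Pi.sub_apply]
      exact integral_sub integrable_condExp.restrict integrable_condExp.restrict
    have h2 : ∫ x in S, g x ∂P
        = ∫ x in S, f x ∂P - ∫ x in S, (P[f | MeasurableSpace.generateFrom (Q : Set (Set Ω))]) x ∂P := by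
      simp only [hgdef, Pi.sub_apply]
      exact integral_sub hfint.restrict integrable_condExp.restrict
    rw [h1, h2, hcondR]
  have hδlt : δ < ∫ x, ‖h x‖ ∂P := by
    have h1 : |∫ x in S, h x ∂P| ≤ ∫ x in S, ‖h x‖ ∂P := by
      simpa using norm_integral_le_integral_norm (μ := P.restrict S) h
    have h2 : ∫ x in S, ‖h x‖ ∂P ≤ ∫ x, ‖h x‖ ∂P :=
      setIntegral_le_integral hhint.norm (Filter.Eventually.of_forall fun x => norm_nonneg _)
    have h3 : δ < |∫ x in S, h x ∂P| := by rw [hinteq]; exact hSint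
    linarith
  have hL1 : ENNReal.ofReal δ < eLpNorm h 1 P := by
    rw [eLpNorm_one_eq_lintegral_enorm, ← ofReal_integral_norm_eq_lintegral_enorm hhint]
    exact (ENNReal.ofReal_lt_ofReal_iff_of_nonneg hδ0.le).2 hδlt
  exact lt_of_lt_of_le hL1
    (eLpNorm_le_eLpNorm_of_exponent_le hp1 hhint.aestronglyMeasurable)
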